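/- For any complex symmetric n×n matrix T, there exists a unitary matrix U such that ∑_i |(Uᵀ T U)_{ii}| equals the trace norm ‖T‖ = Tr(√(T T†)). -/

import Mathlib

open scoped BigOperators Matrix ComplexOrder

/-- The trace norm of a complex matrix: `‖T‖ = Tr √(T Tᴴ)`, the sum of the
singular values of `T`. -/
noncomputable def traceNorm {n : ℕ} (T : Matrix (Fin n) (Fin n) ℂ) : ℝ :=
  (((Matrix.posSemidef_self_mul_conjTranspose T).1.eigenvectorUnitary.1 *
      Matrix.diagonal (((↑) : ℝ → ℂ) ∘ Real.sqrt ∘ (Matrix.posSemidef_self_mul_conjTranspose T).1.eigenvalues) *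
      (star (Matrix.posSemidef_self_mul_conjTranspose T).1.eigenvectorUnitary :
        Matrix (Fin n) (Fin n) ℂ)).trace).re

section PSDSqrt

open scoped MatrixOrder

variable {ι : Type*} [Fintype ι] [DecidableEq ι]

/-- square root of a positive semidefinite matrix, via its eigendecomposition. -/
noncomputable def Matrix.PosSemidef.sqrt {A : Matrix ι ι ℂ} (hA : A.PosSemidef) :
    Matrix ι ι ℂ :=
  hA.1.eigenvectorUnitary.1 *
    Matrix.diagonal (((↑) : ℝ → ℂ) ∘ Real.sqrt ∘ hA.1.eigenvalues) *
    (star hA.1.eigenvectorUnitary : Matrix ι ι ℂ)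

lemma Matrix.PosSemidef.sqrt_eq_cfc {A : Matrix ι ι ℂ} (hA : A.PosSemidef) :
    hA.sqrt = CFC.sqrt A := by
  rw [CFC.sqrt_eq_real_sqrt A (Matrix.nonneg_iff_posSemidef.mpr hA), cfcₙ_eq_cfc,
    hA.1.cfc_eq]
  simp only [Matrix.IsHermitian.cfc, Unitary.conjStarAlgAut_apply]
  rfl

lemma Matrix.PosSemidef.posSemidef_sqrt {A : Matrix ι ι ℂ} (hA : A.PosSemidef) :
    hA.sqrt.PosSemidef := by
  rw [hA.sqrt_eq_cfc]
  exact Matrix.nonneg_iff_posSemidef.mp (CFC.sqrt_nonneg A)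

lemma Matrix.PosSemidef.sqrt_mul_self {A : Matrix ι ι ℂ} (hA : A.PosSemidef) :
    hA.sqrt * hA.sqrt = A := by
  rw [hA.sqrt_eq_cfc]
  exact CFC.sqrt_mul_sqrt_self A (Matrix.nonneg_iff_posSemidef.mpr hA)

lemma Matrix.PosSemidef.eq_sqrt_of_sq_eq {A : Matrix ι ι ℂ} (hA : A.PosSemidef)
    {B : Matrix ι ι ℂ} (hB : B.PosSemidef) (h : A ^ 2 = B) : A = hB.sqrt := by
  rw [hB.sqrt_eq_cfc]
  exact (CFC.sqrt_unique (by rw [← pow_two]; exact h)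
    (Matrix.nonneg_iff_posSemidef.mpr hA)).symm

end PSDSqrt

namespace TakagiAux

set_option linter.unusedSectionVars false

variable {ι : Type*} [Fintype ι] [DecidableEq ι]

lemma sum_split {M : Type*} [AddCommMonoid M] (i₀ : ι) (f : ι → M) :
    ∑ i, f i = f i₀ + ∑ j : {j : ι // j ≠ i₀}, f j := by
  rw [add_comm, ← Finset.sum_erase_add _ _ (Finset.mem_univ i₀)]
  congr 1
  exact Finset.sum_subtype (Finset.univ.erase i₀)
    (fun x => by simp [Finset.mem_erase]) f

/-- Extend a matrix on the complement of `i₀` by a scalar `c` in the `(i₀, i₀)` slot. -/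
def ext (i₀ : ι) (c : ℂ) (B : Matrix {j : ι // j ≠ i₀} {j : ι // j ≠ i₀} ℂ) : Matrix ι ι ℂ :=
  Matrix.of fun i j =>
    if hi : i = i₀ then (if j = i₀ then c else 0)
    else if hj : j = i₀ then 0 else B ⟨i, hi⟩ ⟨j, hj⟩

variable {i₀ : ι}

@[simp] lemma ext_apply_left (c : ℂ) (B : Matrix {j : ι // j ≠ i₀} {j // j ≠ i₀} ℂ) (j : ι) :
    ext i₀ c B i₀ j = if j = i₀ then c else 0 := by simp [ext]

@[simp] lemma ext_apply_right (c : ℂ) (B : Matrix {j : ι // j ≠ i₀} {j // j ≠ i₀} ℂ)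
    (i : {j : ι // j ≠ i₀}) : ext i₀ c B (i : ι) i₀ = 0 := by
  simp [ext, i.2]

@[simp] lemma ext_apply_ne (c : ℂ) (B : Matrix {j : ι // j ≠ i₀} {j // j ≠ i₀} ℂ)
    (i j : {j : ι // j ≠ i₀}) : ext i₀ c B (i : ι) (j : ι) = B i j := by
  simp [ext, i.2, j.2]

lemma ext_mul (c d : ℂ) (B C : Matrix {j : ι // j ≠ i₀} {j // j ≠ i₀} ℂ) :
    ext i₀ c B * ext i₀ d C = ext i₀ (c * d) (B * C) := by
  ext i j
  rw [Matrix.mul_apply, sum_split i₀]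
  by_cases hi : i = i₀
  · have hterm : ∀ k : {j : ι // j ≠ i₀}, ext i₀ c B i (k : ι) * ext i₀ d C (k : ι) j = 0 :=
      fun k => by simp [ext, hi, k.2]
    simp only [hterm, Finset.sum_const_zero, add_zero]
    simp [ext, hi, mul_ite, mul_zero]
  · by_cases hj : j = i₀
    · have hterm : ∀ k : {j : ι // j ≠ i₀}, ext i₀ c B i (k : ι) * ext i₀ d C (k : ι) j = 0 :=
        fun k => by simp [ext, hj, k.2]
      simp only [hterm, Finset.sum_const_zero, add_zero]
      simp [ext, hi, hj]
    · have h1 : ext i₀ c B i i₀ * ext i₀ d C i₀ j = 0 := by simp [ext, hi, hj]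
      rw [h1, zero_add]
      have hterm : ∀ k : {j : ι // j ≠ i₀}, ext i₀ c B i (k : ι) * ext i₀ d C (k : ι) j
          = B ⟨i, hi⟩ k * C k ⟨j, hj⟩ := fun k => by simp [ext, hi, hj, k.2]
      simp only [hterm]
      simp [ext, hi, hj, Matrix.mul_apply]

lemma ext_conjTranspose (c : ℂ) (B : Matrix {j : ι // j ≠ i₀} {j // j ≠ i₀} ℂ) :
    (ext i₀ c B)ᴴ = ext i₀ (starRingEnd ℂ c) Bᴴ := by
  ext i j
  by_cases hi : i = i₀ <;> by_cases hj : j = i₀ <;>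
    simp [ext, Matrix.conjTranspose_apply, hi, hj]

lemma ext_transpose (c : ℂ) (B : Matrix {j : ι // j ≠ i₀} {j // j ≠ i₀} ℂ) :
    (ext i₀ c B)ᵀ = ext i₀ c Bᵀ := by
  ext i j
  by_cases hi : i = i₀ <;> by_cases hj : j = i₀ <;>
    simp [ext, Matrix.transpose_apply, hi, hj]

lemma ext_one : ext i₀ 1 (1 : Matrix {j : ι // j ≠ i₀} {j // j ≠ i₀} ℂ) = 1 := by
  ext i j
  by_cases hi : i = i₀ <;> by_cases hj : j = i₀
  · simp [ext, hi, hj, Matrix.one_apply]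
  · have h : i ≠ j := fun h => hj (h ▸ hi)
    simp [ext, hi, hj, Matrix.one_apply_ne h]
  · have h : i ≠ j := fun h => hi (h.symm ▸ hj)
    simp [ext, hi, hj, Matrix.one_apply_ne h]
  · simp [ext, hi, hj, Matrix.one_apply, Subtype.ext_iff]

lemma ext_trace (c : ℂ) (B : Matrix {j : ι // j ≠ i₀} {j // j ≠ i₀} ℂ) :
    (ext i₀ c B).trace = c + B.trace := by
  rw [Matrix.trace, Matrix.trace, sum_split i₀]
  simp [Matrix.diag]

lemma ext_psd {c : ℝ} (hc : 0 ≤ c) {B : Matrix {j : ι // j ≠ i₀} {j // j ≠ i₀} ℂ}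
    (hB : B.PosSemidef) : (ext i₀ (c : ℂ) B).PosSemidef := by
  have key : ext i₀ ((Real.sqrt c : ℝ) : ℂ) hB.sqrt
      * (ext i₀ ((Real.sqrt c : ℝ) : ℂ) hB.sqrt)ᴴ = ext i₀ (c : ℂ) B := by
    rw [ext_conjTranspose, ext_mul, Complex.conj_ofReal, ← Complex.ofReal_mul,
      Real.mul_self_sqrt hc, hB.posSemidef_sqrt.1, hB.sqrt_mul_self]
  have h2 := Matrix.posSemidef_self_mul_conjTranspose
    (ext i₀ ((Real.sqrt c : ℝ) : ℂ) hB.sqrt)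
  rwa [key] at h2

lemma sqrt_congr {A B : Matrix ι ι ℂ} (h : A = B) (hA : A.PosSemidef) (hB : B.PosSemidef) :
    hA.sqrt = hB.sqrt := by subst h; rfl

lemma ext_sqrt {c : ℝ} (hc : 0 ≤ c) {B : Matrix {j : ι // j ≠ i₀} {j // j ≠ i₀} ℂ}
    (hB : B.PosSemidef) (hE : (ext i₀ (c : ℂ) B).PosSemidef) :
    hE.sqrt = ext i₀ ((Real.sqrt c : ℝ) : ℂ) hB.sqrt := by
  refine ((ext_psd (Real.sqrt_nonneg c) hB.posSemidef_sqrt).eq_sqrt_of_sq_eq hE ?_).symm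
  rw [pow_two, ext_mul, ← Complex.ofReal_mul, Real.mul_self_sqrt hc, hB.sqrt_mul_self]

lemma ext_unitary {V' : Matrix {j : ι // j ≠ i₀} {j // j ≠ i₀} ℂ}
    (hV' : V' ∈ Matrix.unitaryGroup {j : ι // j ≠ i₀} ℂ) :
    ext i₀ 1 V' ∈ Matrix.unitaryGroup ι ℂ := by
  rw [Matrix.mem_unitaryGroup_iff] at hV' ⊢
  rw [Matrix.star_eq_conjTranspose] at hV' ⊢
  rw [ext_conjTranspose, ext_mul, hV', map_one, one_mul, ext_one]

lemma transpose_unitary {U : Matrix ι ι ℂ} (hU : U ∈ Matrix.unitaryGroup ι ℂ) :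
    Uᵀ ∈ Matrix.unitaryGroup ι ℂ := by
  have h : U * Uᴴ = 1 := by
    simpa [Matrix.star_eq_conjTranspose] using Matrix.mem_unitaryGroup_iff.mp hU
  rw [Matrix.mem_unitaryGroup_iff', Matrix.star_eq_conjTranspose]
  have h2 : Uᵀᴴ = Uᴴᵀ := Matrix.ext fun i j => rfl
  have : Uᵀᴴ * Uᵀ = (U * Uᴴ)ᵀ := by rw [Matrix.transpose_mul, h2]
  rw [this, h, Matrix.transpose_one]

lemma sqrt_unitary_conj {A : Matrix ι ι ℂ} (hA : A.PosSemidef) {W : Matrix ι ι ℂ}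
    (hW : W ∈ Matrix.unitaryGroup ι ℂ) :
    (hA.mul_mul_conjTranspose_same W).sqrt = W * hA.sqrt * Wᴴ := by
  have h1 : Wᴴ * W = 1 := by
    simpa [Matrix.star_eq_conjTranspose] using Matrix.mem_unitaryGroup_iff'.mp hW
  refine ((hA.posSemidef_sqrt.mul_mul_conjTranspose_same W).eq_sqrt_of_sq_eq
    (hA.mul_mul_conjTranspose_same W) ?_).symm
  rw [pow_two]
  calc (W * hA.sqrt * Wᴴ) * (W * hA.sqrt * Wᴴ)
      = W * (hA.sqrt * (Wᴴ * W) * hA.sqrt) * Wᴴ := by simp only [Matrix.mul_assoc]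
    _ = W * A * Wᴴ := by rw [h1, Matrix.mul_one, hA.sqrt_mul_self]

/-- trace-norm on an arbitrary finite index type. -/
noncomputable def tn (T : Matrix ι ι ℂ) : ℝ :=
  ((Matrix.posSemidef_self_mul_conjTranspose T).sqrt.trace).re

lemma tn_unitary_conj (T : Matrix ι ι ℂ) {U : Matrix ι ι ℂ}
    (hU : U ∈ Matrix.unitaryGroup ι ℂ) :
    tn (Uᵀ * T * U) = tn T := by
  have hW := transpose_unitary hU
  have hUU : U * Uᴴ = 1 := by
    simpa [Matrix.star_eq_conjTranspose] using Matrix.mem_unitaryGroup_iff.mp hU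
  have hWW : (Uᵀ)ᴴ * Uᵀ = 1 := by
    simpa [Matrix.star_eq_conjTranspose] using Matrix.mem_unitaryGroup_iff'.mp hW
  have hMM : (Uᵀ * T * U) * (Uᵀ * T * U)ᴴ = Uᵀ * (T * Tᴴ) * (Uᵀ)ᴴ := by
    simp only [Matrix.conjTranspose_mul, Matrix.mul_assoc]
    congr 2
    rw [← Matrix.mul_assoc U Uᴴ, hUU, Matrix.one_mul]
  unfold tn
  rw [sqrt_congr hMM (Matrix.posSemidef_self_mul_conjTranspose _)
    ((Matrix.posSemidef_self_mul_conjTranspose T).mul_mul_conjTranspose_same Uᵀ),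
    sqrt_unitary_conj (Matrix.posSemidef_self_mul_conjTranspose T) hW,
    Matrix.trace_mul_cycle, hWW, Matrix.one_mul]

lemma exists_singular_vec [Nonempty ι] (T : Matrix ι ι ℂ) (hT : Tᵀ = T) :
    ∃ (σ : ℝ) (v : ι → ℂ), 0 ≤ σ ∧ ‖(WithLp.equiv 2 (ι → ℂ)).symm v‖ = 1 ∧
      T *ᵥ (star v) = (σ : ℂ) • v := by
  classical
  have hPSD : (T * Tᴴ).PosSemidef := Matrix.posSemidef_self_mul_conjTranspose T
  have hHerm := hPSD.isHermitian
  obtain ⟨i⟩ := ‹Nonempty ι›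
  set w : ι → ℂ := ⇑(hHerm.eigenvectorBasis i) with hw
  set μ : ℝ := hHerm.eigenvalues i with hμ
  have hμ0 : 0 ≤ μ := hPSD.eigenvalues_nonneg i
  have hweig : (T * Tᴴ) *ᵥ w = (μ : ℂ) • w := by
    have h := hHerm.mulVec_eigenvectorBasis i
    rw [← hw, ← hμ] at h
    rw [h]
    ext j
    simp [Complex.real_smul]
  have hTH : Tᴴ = T.map star := by
    rw [Matrix.conjTranspose, hT]
  have key : ∀ x : ι → ℂ, T *ᵥ star (T *ᵥ star x) = (T * Tᴴ) *ᵥ x := by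
    intro x
    have h1 : star (T *ᵥ star x) = (T.map star) *ᵥ x := by
      ext k
      simp [Matrix.mulVec, dotProduct, Matrix.map_apply, mul_comm]
    rw [h1, Matrix.mulVec_mulVec, ← hTH]
  set σ : ℝ := Real.sqrt μ with hσ
  have hσ0 : 0 ≤ σ := Real.sqrt_nonneg μ
  set u : ι → ℂ := T *ᵥ star w + (σ : ℂ) • w with hu_def
  have hTu : T *ᵥ star u = (σ : ℂ) • u := by
    have h1 : star u = star (T *ᵥ star w) + (σ : ℂ) • star w := by
      ext j
      simp [hu_def, Complex.conj_ofReal]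
    rw [h1, Matrix.mulVec_add, Matrix.mulVec_smul, key w, hweig, hu_def, smul_add,
      smul_smul, ← Complex.ofReal_mul, Real.mul_self_sqrt hμ0, add_comm]
  by_cases hu : u = 0
  · have h2 : T *ᵥ star w = -((σ : ℂ) • w) := by
      have := hu_def ▸ hu
      exact eq_neg_of_add_eq_zero_left (by rw [← hu_def]; exact hu)
    refine ⟨σ, Complex.I • w, hσ0, ?_, ?_⟩
    · have hq : (WithLp.equiv 2 (ι → ℂ)).symm (Complex.I • w)
          = Complex.I • hHerm.eigenvectorBasis i := rfl
      rw [hq, norm_smul]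
      have hwnorm : ‖hHerm.eigenvectorBasis i‖ = 1 := hHerm.eigenvectorBasis.orthonormal.1 i
      rw [hwnorm]
      simp
    · have h3 : star (Complex.I • w) = (-Complex.I) • star w := by
        ext j; simp
      rw [h3, Matrix.mulVec_smul, h2, smul_neg, smul_smul, ← neg_smul, smul_smul]
      congr 1
      ring
  · set r : ℝ := ‖(WithLp.equiv 2 (ι → ℂ)).symm u‖ with hr
    have hr0 : r ≠ 0 := by
      simp only [hr, ne_eq, norm_eq_zero]
      intro h0
      apply hu
      have : (WithLp.equiv 2 (ι → ℂ)).symm u = 0 := h0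
      simpa using congrArg (WithLp.equiv 2 (ι → ℂ)) this
    refine ⟨σ, ((r : ℂ))⁻¹ • u, hσ0, ?_, ?_⟩
    · have hq : (WithLp.equiv 2 (ι → ℂ)).symm (((r : ℂ))⁻¹ • u)
          = ((r : ℂ))⁻¹ • (WithLp.equiv 2 (ι → ℂ)).symm u := rfl
      rw [hq, norm_smul, ← hr]
      have : ‖((r : ℂ))⁻¹‖ = r⁻¹ := by
        rw [norm_inv, Complex.norm_real, Real.norm_eq_abs,
          abs_of_nonneg (by positivity : (0:ℝ) ≤ r)]
      rw [this, inv_mul_cancel₀ hr0]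
    · have h1 : star (((r : ℂ))⁻¹ • u) = ((r : ℂ))⁻¹ • star u := by
        ext j
        simp [← Complex.ofReal_inv, Complex.conj_ofReal]
      rw [h1, Matrix.mulVec_smul, hTu, smul_smul, smul_smul, mul_comm]

lemma exists_unitary_col (i₀ : ι) (v : ι → ℂ)
    (hv : ‖(WithLp.equiv 2 (ι → ℂ)).symm v‖ = 1) :
    ∃ U₀ ∈ Matrix.unitaryGroup ι ℂ, ∀ k, U₀ k i₀ = star (v k) := by
  classical
  set sv : EuclideanSpace ℂ ι := (WithLp.equiv 2 (ι → ℂ)).symm (star v) with hsv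
  have hsvnorm : ‖sv‖ = 1 := by
    rw [EuclideanSpace.norm_eq] at hv ⊢
    simpa [hsv, WithLp.equiv_symm_apply, Pi.star_apply, Complex.star_def,
      Complex.norm_conj] using hv
  have horth : Orthonormal ℂ (({i₀} : Set ι).restrict (fun _ : ι => sv)) := by
    rw [orthonormal_iff_ite]
    rintro ⟨a, ha⟩ ⟨b, hb⟩
    rw [Set.mem_singleton_iff] at ha hb
    subst ha; subst hb
    simp [Set.restrict, inner_self_eq_norm_sq_to_K, hsvnorm]
  obtain ⟨b, hb⟩ := horth.exists_orthonormalBasis_extension_of_card_eq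
    (by simp [finrank_euclideanSpace])
  refine ⟨Matrix.of (fun i j => b j i), ?_, ?_⟩
  · rw [Matrix.mem_unitaryGroup_iff']
    ext j k
    rw [Matrix.mul_apply]
    have horm := b.orthonormal
    rw [orthonormal_iff_ite] at horm
    have h2 := horm j k
    rw [PiLp.inner_apply] at h2
    simpa [Matrix.one_apply, Matrix.star_eq_conjTranspose, Matrix.conjTranspose_apply,
      RCLike.inner_apply, mul_comm] using h2
  · intro k
    have hbi : b i₀ = sv := hb i₀ rfl
    have : b i₀ k = star (v k) := by
      rw [hbi, hsv]
      rfl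
    simpa [Matrix.of_apply] using this

lemma key_aux : ∀ (N : ℕ) (ι : Type) [Fintype ι] [DecidableEq ι],
    Fintype.card ι = N → ∀ T : Matrix ι ι ℂ, Tᵀ = T →
    ∃ U ∈ Matrix.unitaryGroup ι ℂ,
      ∑ i, ‖(Uᵀ * T * U) i i‖ = tn T := by
  intro N
  induction N with
  | zero =>
    intro ι _ _ hcard T hT
    have hempty : IsEmpty ι := Fintype.card_eq_zero_iff.mp hcard
    refine ⟨1, one_mem _, ?_⟩
    simp [tn, Matrix.trace]
  | succ n IH =>
    intro ι _ _ hcard T hT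
    have hne : Nonempty ι := Fintype.card_pos_iff.mp (by omega)
    obtain ⟨i₀⟩ := hne
    have hne2 : Nonempty ι := ⟨i₀⟩
    obtain ⟨σ, v, hσ0, hvnorm, hv⟩ := exists_singular_vec T hT
    obtain ⟨U₀, hU₀, hcol⟩ := exists_unitary_col i₀ v hvnorm
    set M : Matrix ι ι ℂ := U₀ᵀ * T * U₀ with hM
    have hMsym : Mᵀ = M := by
      rw [hM, Matrix.transpose_mul, Matrix.transpose_mul, Matrix.transpose_transpose, hT,
        Matrix.mul_assoc]
    have hvcol : ∀ l, v l = star (U₀ l i₀) := fun l => by rw [hcol l, star_star]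
    have hUU : U₀ᴴ * U₀ = 1 := by
      simpa [Matrix.star_eq_conjTranspose] using Matrix.mem_unitaryGroup_iff'.mp hU₀
    have hMcol : ∀ j, M j i₀ = if j = i₀ then (σ : ℂ) else 0 := by
      intro j
      have h1 : M j i₀ = ∑ l, U₀ l j * ((T *ᵥ star v) l) := by
        rw [hM]
        simp only [Matrix.mul_apply, Matrix.transpose_apply, Matrix.mulVec, dotProduct,
          Finset.sum_mul, Finset.mul_sum]
        rw [Finset.sum_comm]
        refine Finset.sum_congr rfl fun l _ => Finset.sum_congr rfl fun k _ => ?_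
        rw [hcol k, Pi.star_apply]
        ring
      have h2 : ∑ l, U₀ l j * (((σ : ℂ) • v) l) = (σ : ℂ) * star ((U₀ᴴ * U₀) j i₀) := by
        rw [Matrix.mul_apply, star_sum, Finset.mul_sum]
        refine Finset.sum_congr rfl fun l _ => ?_
        rw [Matrix.conjTranspose_apply, star_mul', star_star, ← hvcol l]
        simp only [Pi.smul_apply, smul_eq_mul]
        ring
      rw [h1, hv, h2, hUU]
      simp only [Matrix.one_apply, apply_ite (star : ℂ → ℂ), star_one, star_zero, mul_ite,
        mul_one, mul_zero]
    have hMrow : ∀ j, M i₀ j = if j = i₀ then (σ : ℂ) else 0 := by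
      intro j
      have h : M i₀ j = M j i₀ := by
        have h0 := congrFun (congrFun hMsym i₀) j
        simpa [Matrix.transpose_apply] using h0.symm
      rw [h, hMcol j]
    set T' : Matrix {j : ι // j ≠ i₀} {j : ι // j ≠ i₀} ℂ :=
      Matrix.of (fun a b => M (a : ι) (b : ι)) with hT'
    have hText : M = ext i₀ (σ : ℂ) T' := by
      ext i j
      by_cases hi : i = i₀
      · rw [hi, hMrow j, ext_apply_left]
      · by_cases hj : j = i₀
        · rw [hj]
          have := ext_apply_right (i₀ := i₀) (σ : ℂ) T' ⟨i, hi⟩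
          rw [this, hMcol i, if_neg hi]
        · have := ext_apply_ne (i₀ := i₀) (σ : ℂ) T' ⟨i, hi⟩ ⟨j, hj⟩
          rw [this]
          rfl
    have hT'sym : T'ᵀ = T' := by
      ext a b
      have := congrFun (congrFun hMsym (a : ι)) (b : ι)
      simpa [hT', Matrix.transpose_apply] using this
    have hκcard : Fintype.card {j : ι // j ≠ i₀} = n := by
      have h1 := Fintype.card_subtype_compl (fun j : ι => j = i₀)
      have h2 : Fintype.card {j : ι // j = i₀} = 1 := Fintype.card_subtype_eq i₀
      simp only [ne_eq]
      omega
    obtain ⟨V', hV', hs⟩ := IH {j : ι // j ≠ i₀} hκcard T' hT'sym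
    refine ⟨U₀ * ext i₀ 1 V', mul_mem hU₀ (ext_unitary hV'), ?_⟩
    have hTr : (U₀ * ext i₀ 1 V')ᵀ * T * (U₀ * ext i₀ 1 V')
        = ext i₀ (σ : ℂ) (V'ᵀ * T' * V') := by
      rw [Matrix.transpose_mul]
      have : (ext i₀ 1 V')ᵀ * U₀ᵀ * T * (U₀ * ext i₀ 1 V')
          = (ext i₀ 1 V')ᵀ * M * ext i₀ 1 V' := by
        rw [hM]
        simp only [Matrix.mul_assoc]
      rw [this, ext_transpose, hText, ext_mul, ext_mul, one_mul, mul_one]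
    rw [hTr, sum_split i₀]
    have hd1 : ‖ext i₀ (σ : ℂ) (V'ᵀ * T' * V') i₀ i₀‖ = σ := by
      rw [ext_apply_left, if_pos rfl, Complex.norm_real, Real.norm_eq_abs, abs_of_nonneg hσ0]
    have hd2 : ∀ a : {j : ι // j ≠ i₀},
        ‖ext i₀ (σ : ℂ) (V'ᵀ * T' * V') (a : ι) (a : ι)‖
          = ‖(V'ᵀ * T' * V') a a‖ := fun a => by
      rw [ext_apply_ne]
    rw [hd1]
    simp only [hd2]
    rw [hs]
    -- remains : σ + tn T' = tn T
    have htnM : tn T = tn M := (tn_unitary_conj T hU₀).symm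
    have hMM : M * Mᴴ = ext i₀ ((σ ^ 2 : ℝ) : ℂ) (T' * T'ᴴ) := by
      rw [hText, ext_conjTranspose, ext_mul]
      rw [Complex.conj_ofReal, ← Complex.ofReal_mul]
      norm_num [pow_two]
    have hE : (ext i₀ ((σ ^ 2 : ℝ) : ℂ) (T' * T'ᴴ)).PosSemidef := by
      rw [← hMM]; exact Matrix.posSemidef_self_mul_conjTranspose M
    have htnM2 : tn M = σ + tn T' := by
      unfold tn
      rw [sqrt_congr hMM (Matrix.posSemidef_self_mul_conjTranspose M) hE,
        ext_sqrt (by positivity) (Matrix.posSemidef_self_mul_conjTranspose T') hE,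
        ext_trace, Real.sqrt_sq hσ0]
      simp
    rw [htnM, htnM2]

end TakagiAux


/-- For any complex symmetric matrix `T` there is a unitary `U` such that
`∑ i |(Uᵀ T U)ᵢᵢ|` equals the trace norm of `T`. -/
theorem exists_unitary_diag_abs_sum_eq_traceNorm {n : ℕ}
    (T : Matrix (Fin n) (Fin n) ℂ) (hT : Tᵀ = T) :
    ∃ U ∈ Matrix.unitaryGroup (Fin n) ℂ,
      ∑ i, ‖(Uᵀ * T * U) i i‖ = traceNorm T := by
  obtain ⟨U, hU, h⟩ := TakagiAux.key_aux n (Fin n) (Fintype.card_fin n) T hT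
  exact ⟨U, hU, h⟩
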